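/- Let C be a topological cone. Then the dual cone C*, i.e. the set of lower semicontinuous linear maps from C to ℝ≥0∞ equipped with the weak*upper topology, is a sober topological space. -/

import Mathlib

open Set Topology

noncomputable section

/-- The topology on `ℝ≥0` induced by the Scott topology on `ℝ≥0∞`:
its nonempty proper open sets are the intervals `(r, ∞)`. -/
def scottNNReal : TopologicalSpace NNReal :=
  TopologicalSpace.generateFrom {s : Set NNReal | ∃ r : NNReal, s = Set.Ioi r}

/-- Lower semicontinuity of a map into `ℝ≥0∞`, i.e. continuity into `ℝ≥0∞`
with the Scott topology of its usual order. -/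
def IsLSC {X : Type*} [TopologicalSpace X] (f : X → ENNReal) : Prop :=
  ∀ r : ENNReal, IsOpen {x : X | r < f x}

/-- A topological cone: addition and scalar multiplication are jointly continuous,
where `ℝ≥0` carries the (subspace) Scott topology. -/
def IsTopologicalCone (C : Type*) [TopologicalSpace C] [Add C] [SMul NNReal C] : Prop :=
  Continuous (fun p : C × C => p.1 + p.2) ∧
    Continuous[@instTopologicalSpaceProd NNReal C scottNNReal _, _]
      (fun p : NNReal × C => p.1 • p.2)

/-- A linear lower semicontinuous map `C → ℝ≥0∞`; the elements of the dual cone `C*`. -/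
def IsLinearLSC {C : Type*} [TopologicalSpace C] [Add C] [SMul NNReal C]
    (Λ : C → ENNReal) : Prop :=
  (∀ x y : C, Λ (x + y) = Λ x + Λ y) ∧
    (∀ (a : NNReal) (x : C), Λ (a • x) = (a : ENNReal) * Λ x) ∧ IsLSC Λ

/-- The specialization preorder: `x ≤ y` iff every open set containing `x` contains `y`. -/
def SpecLE {X : Type*} [TopologicalSpace X] (x y : X) : Prop :=
  ∀ U : Set X, IsOpen U → x ∈ U → y ∈ U

/-- A set is saturated iff it is upward closed for the specialization preorder. -/
def IsSaturated {X : Type*} [TopologicalSpace X] (A : Set X) : Prop :=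
  ∀ x ∈ A, ∀ y : X, SpecLE x y → y ∈ A

/-- Upward closure with respect to the specialization preorder. -/
def upClosure {X : Type*} [TopologicalSpace X] (A : Set X) : Set X :=
  {y : X | ∃ x ∈ A, SpecLE x y}

/-- Convexity of a subset of a cone. -/
def IsConeConvex {C : Type*} [Add C] [SMul NNReal C] (A : Set C) : Prop :=
  ∀ x ∈ A, ∀ y ∈ A, ∀ a : NNReal, a ≤ 1 → a • x + (1 - a) • y ∈ A

/-- A cone with a topology is locally convex if every point has a neighborhood base
of convex open sets. -/
def IsLocallyConvexCone (C : Type*) [TopologicalSpace C] [Add C] [SMul NNReal C] : Prop :=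
  ∀ x : C, ∀ U : Set C, IsOpen U → x ∈ U →
    ∃ V : Set C, IsOpen V ∧ IsConeConvex V ∧ x ∈ V ∧ V ⊆ U

/-- A cone with a topology is locally convex-compact if every point has a neighborhood base
of convex compact sets. -/
def IsLocallyConvexCompactCone (C : Type*) [TopologicalSpace C] [Add C] [SMul NNReal C] : Prop :=
  ∀ x : C, ∀ U : Set C, IsOpen U → x ∈ U →
    ∃ K : Set C, IsCompact K ∧ IsConeConvex K ∧ x ∈ interior K ∧ K ⊆ U

/-- A continuous valuation on a topological space `X`. -/
structure ContinuousValuation (X : Type*) [TopologicalSpace X] where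
  toFun : Set X → ENNReal
  empty' : toFun ∅ = 0
  modular' : ∀ U V : Set X, IsOpen U → IsOpen V →
    toFun (U ∪ V) + toFun (U ∩ V) = toFun U + toFun V
  mono' : ∀ U V : Set X, IsOpen U → IsOpen V → U ⊆ V → toFun U ≤ toFun V
  scott' : ∀ D : Set (Set X), (∀ U ∈ D, IsOpen U) → DirectedOn (· ⊆ ·) D →
    toFun (⋃₀ D) = ⨆ U ∈ D, toFun U

/-- The integral `∫ h dν = ∫₀^∞ ν({x : h(x) > t}) dt` of a map `h : X → ℝ≥0∞`
against a continuous valuation `ν`. -/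
def valIntegral {X : Type*} [TopologicalSpace X] (ν : ContinuousValuation X)
    (h : X → ENNReal) : ENNReal :=
  ∫⁻ t in Set.Ioi (0 : ℝ), ν.toFun {x : X | ENNReal.ofReal t < h x}

/-- A barycenter of a continuous valuation `ν` on a cone `C`: a point `x₀` with
`Λ(x₀) = ∫ Λ dν` for every `Λ ∈ C*`. -/
def IsBarycenter {C : Type*} [TopologicalSpace C] [Add C] [SMul NNReal C]
    (ν : ContinuousValuation C) (x₀ : C) : Prop :=
  ∀ Λ : C → ENNReal, IsLinearLSC Λ → Λ x₀ = valIntegral ν Λ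

/-- The weak topology on the set of continuous valuations, generated by the subbasic
open sets `[U > r] = {ν : ν(U) > r}` for `U` open and `r : ℝ≥0`. -/
def weakTopology (X : Type*) [TopologicalSpace X] :
    TopologicalSpace (ContinuousValuation X) :=
  TopologicalSpace.generateFrom
    {S : Set (ContinuousValuation X) | ∃ (U : Set X) (r : NNReal),
      IsOpen U ∧ S = {ν : ContinuousValuation X | (r : ENNReal) < ν.toFun U}}

lemma isLSC_iff_lowerSemicontinuous {X : Type*} [TopologicalSpace X] {f : X → ENNReal} :
    IsLSC f ↔ LowerSemicontinuous f := by
  rw [lowerSemicontinuous_iff_isOpen_preimage]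
  exact Iff.rfl

/-- The dual cone `C*` of lower semicontinuous linear maps `C → ℝ≥0∞`. -/
def Cdual (C : Type*) [TopologicalSpace C] [Add C] [SMul NNReal C] : Type _ :=
  {Λ : C → ENNReal // IsLinearLSC Λ}

/-- Pointwise addition on `C*`. -/
instance instAddCdual {C : Type*} [TopologicalSpace C] [Add C] [SMul NNReal C] :
    Add (Cdual C) :=
  ⟨fun Λ₁ Λ₂ => ⟨fun x => Λ₁.1 x + Λ₂.1 x,
    fun x y => by simp only []; rw [Λ₁.2.1 x y, Λ₂.2.1 x y]; ring,
    fun a x => by simp only []; rw [Λ₁.2.2.1 a x, Λ₂.2.2.1 a x, mul_add],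
    isLSC_iff_lowerSemicontinuous.2
      ((isLSC_iff_lowerSemicontinuous.1 Λ₁.2.2.2).add
        (isLSC_iff_lowerSemicontinuous.1 Λ₂.2.2.2))⟩⟩

/-- Pointwise scalar multiplication on `C*`. -/
instance instSMulCdual {C : Type*} [TopologicalSpace C] [Add C] [SMul NNReal C] :
    SMul NNReal (Cdual C) :=
  ⟨fun a Λ => ⟨fun x => (a : ENNReal) * Λ.1 x,
    fun x y => by simp only []; rw [Λ.2.1 x y, mul_add],
    fun b x => by simp only []; rw [Λ.2.2.1 b x]; ring,
    isLSC_iff_lowerSemicontinuous.2 <| by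
      have hc : Continuous fun t : ENNReal => (a : ENNReal) * t :=
        ENNReal.continuous_const_mul (by simp)
      exact hc.comp_lowerSemicontinuous (isLSC_iff_lowerSemicontinuous.1 Λ.2.2.2)
        (fun u v huv => mul_le_mul_right huv _)⟩⟩

/-- The weak*upper topology on `C*`: the coarsest topology making `Λ ↦ Λ(x)` lower
semicontinuous for every `x ∈ C`. -/
def dualTopology (C : Type*) [TopologicalSpace C] [Add C] [SMul NNReal C] :
    TopologicalSpace (Cdual C) :=
  TopologicalSpace.generateFrom
    {S : Set (Cdual C) | ∃ (x : C) (r : ENNReal), S = {Λ : Cdual C | r < Λ.1 x}}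

section SoberProof

variable {C : Type*} [TopologicalSpace C] [AddCommMonoid C] [Module NNReal C]

/-- The subbasis of the weak*upper topology. -/
private def dualSub (C : Type*) [TopologicalSpace C] [Add C] [SMul NNReal C] :
    Set (Set (Cdual C)) :=
  {S : Set (Cdual C) | ∃ (x : C) (r : ENNReal), S = {Λ : Cdual C | r < Λ.1 x}}

private lemma gen_mono {Λ Λ' : Cdual C} (h : ∀ x, Λ.1 x ≤ Λ'.1 x)
    {U : Set (Cdual C)} (hU : TopologicalSpace.GenerateOpen (dualSub C) U) :
    Λ ∈ U → Λ' ∈ U := by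
  induction hU with
  | basic s hs =>
    obtain ⟨x, r, rfl⟩ := hs
    exact fun hm => lt_of_lt_of_le hm (h x)
  | univ => exact fun _ => trivial
  | inter u v _ _ ihu ihv => exact fun hm => ⟨ihu hm.1, ihv hm.2⟩
  | sUnion K _ ih =>
    rintro ⟨u, huK, hmu⟩
    exact ⟨u, huK, ih u huK hmu⟩

theorem dual_cone_sober' {C : Type*} [TopologicalSpace C]
    [AddCommMonoid C] [Module NNReal C] :
    @T0Space (Cdual C) (dualTopology C) ∧ @QuasiSober (Cdual C) (dualTopology C) := by
  letI : TopologicalSpace (Cdual C) := dualTopology C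
  have hsub : ∀ (x : C) (r : ENNReal), IsOpen {Λ : Cdual C | r < Λ.1 x} :=
    fun x r => TopologicalSpace.GenerateOpen.basic _ ⟨x, r, rfl⟩
  have hopen : ∀ {U : Set (Cdual C)}, IsOpen U → TopologicalSpace.GenerateOpen (dualSub C) U :=
    fun h => h
  constructor
  · refine (t0Space_iff_inseparable (Cdual C)).2 fun Λ Λ' h => ?_
    refine Subtype.ext (funext fun x => ?_)
    have key : ∀ r : ENNReal, r < Λ.1 x ↔ r < Λ'.1 x :=
      fun r => h.mem_open_iff (hsub x r)
    exact le_antisymm (le_of_forall_lt fun r hr => (key r).1 hr)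
      (le_of_forall_lt fun r hr => (key r).2 hr)
  · refine ⟨fun {S} hS hSc => ?_⟩
    -- the candidate generic point: pointwise supremum over S
    haveI : Nonempty S := hS.nonempty.to_subtype
    set f : C → ENNReal := fun x => ⨆ Λ : S, (Λ : Cdual C).1 x with hf
    -- additivity
    have hadd : ∀ x y : C, f (x + y) = f x + f y := by
      intro x y
      refine le_antisymm (iSup_le fun Λ => ?_) ?_
      · rw [(Λ : Cdual C).2.1 x y]
        exact add_le_add (le_iSup (fun Λ : S => (Λ : Cdual C).1 x) Λ)
          (le_iSup (fun Λ : S => (Λ : Cdual C).1 y) Λ)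
      · rcases eq_or_ne (f x) 0 with hx0 | hx0
        · rw [hx0, zero_add]
          refine iSup_le fun Λ => ?_
          have : (Λ : Cdual C).1 x = 0 :=
            le_antisymm (hx0 ▸ le_iSup (fun Λ : S => (Λ : Cdual C).1 x) Λ) zero_le
          calc (Λ : Cdual C).1 y = (Λ : Cdual C).1 x + (Λ : Cdual C).1 y := by
                rw [this, zero_add]
            _ = (Λ : Cdual C).1 (x + y) := ((Λ : Cdual C).2.1 x y).symm
            _ ≤ f (x + y) := le_iSup (fun Λ : S => (Λ : Cdual C).1 (x + y)) Λ
        rcases eq_or_ne (f y) 0 with hy0 | hy0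
        · rw [hy0, add_zero]
          refine iSup_le fun Λ => ?_
          have : (Λ : Cdual C).1 y = 0 :=
            le_antisymm (hy0 ▸ le_iSup (fun Λ : S => (Λ : Cdual C).1 y) Λ) zero_le
          calc (Λ : Cdual C).1 x = (Λ : Cdual C).1 x + (Λ : Cdual C).1 y := by
                rw [this, add_zero]
            _ = (Λ : Cdual C).1 (x + y) := ((Λ : Cdual C).2.1 x y).symm
            _ ≤ f (x + y) := le_iSup (fun Λ : S => (Λ : Cdual C).1 (x + y)) Λ
        refine le_of_forall_lt fun t ht => ?_
        obtain ⟨r, hr, s, hs, hts⟩ := ENNReal.exists_lt_add_of_lt_add ht hx0 hy0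
        obtain ⟨Λ₁, hΛ₁⟩ := lt_iSup_iff.1 hr
        obtain ⟨Λ₂, hΛ₂⟩ := lt_iSup_iff.1 hs
        obtain ⟨Λ, hΛS, hΛx, hΛy⟩ := hS.2 {Λ : Cdual C | r < Λ.1 x} {Λ : Cdual C | s < Λ.1 y}
          (hsub x r) (hsub y s) ⟨Λ₁, Λ₁.2, hΛ₁⟩ ⟨Λ₂, Λ₂.2, hΛ₂⟩
        calc t < r + s := hts
          _ ≤ Λ.1 x + Λ.1 y := add_le_add hΛx.le hΛy.le
          _ = Λ.1 (x + y) := (Λ.2.1 x y).symm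
          _ ≤ f (x + y) := le_iSup (fun Λ : S => (Λ : Cdual C).1 (x + y)) ⟨Λ, hΛS⟩
    have hsmul : ∀ (a : NNReal) (x : C), f (a • x) = (a : ENNReal) * f x := by
      intro a x
      rw [hf]
      simp only [fun Λ : S => (Λ : Cdual C).2.2.1 a x]
      exact (ENNReal.mul_iSup _ _).symm
    have hlsc : IsLSC f := by
      intro r
      have : {x : C | r < f x} = ⋃ Λ : S, {x : C | r < (Λ : Cdual C).1 x} := by
        ext x
        simp only [Set.mem_setOf_eq, Set.mem_iUnion, hf, lt_iSup_iff]
      rw [this]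
      exact isOpen_iUnion fun Λ => (Λ : Cdual C).2.2.2 r
    set Λ₀ : Cdual C := ⟨f, hadd, hsmul, hlsc⟩ with hΛ₀
    have hle : ∀ Λ ∈ S, ∀ x, Λ.1 x ≤ Λ₀.1 x :=
      fun Λ hΛ x => le_iSup (fun Λ : S => (Λ : Cdual C).1 x) ⟨Λ, hΛ⟩
    -- Λ₀ ∈ S
    have hmem : Λ₀ ∈ S := by
      rw [← hSc.closure_eq]
      rw [mem_closure_iff]
      intro U hU hΛ₀U
      -- by induction on the generated topology
      have : ∀ V : Set (Cdual C), TopologicalSpace.GenerateOpen (dualSub C) V →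
          Λ₀ ∈ V → (V ∩ S).Nonempty := by
        intro V hV
        induction hV with
        | basic s hs =>
          obtain ⟨x, r, rfl⟩ := hs
          intro hr
          obtain ⟨Λ, hΛ⟩ := lt_iSup_iff.1 (show r < ⨆ Λ : S, (Λ : Cdual C).1 x from hr)
          exact ⟨Λ, hΛ, Λ.2⟩
        | univ => exact fun _ => by simpa using hS.nonempty
        | inter u v hu hv ihu ihv =>
          intro hm
          obtain ⟨Λ, hΛS, hΛu, hΛv⟩ := hS.2 u v hu hv
            ((ihu hm.1).imp fun Λ h => ⟨h.2, h.1⟩)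
            ((ihv hm.2).imp fun Λ h => ⟨h.2, h.1⟩)
          exact ⟨Λ, ⟨hΛu, hΛv⟩, hΛS⟩
        | sUnion K hK ih =>
          rintro ⟨u, huK, hmu⟩
          obtain ⟨Λ, hΛ⟩ := ih u huK hmu
          exact ⟨Λ, ⟨u, huK, hΛ.1⟩, hΛ.2⟩
      exact this U (hopen hU) hΛ₀U
    refine ⟨Λ₀, ?_⟩
    refine le_antisymm (closure_minimal (Set.singleton_subset_iff.2 hmem) hSc) ?_
    intro Λ hΛ
    rw [mem_closure_iff]
    intro U hU hΛU
    exact ⟨Λ₀, gen_mono (hle Λ hΛ) (hopen hU) hΛU, rfl⟩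

end SoberProof

/-- The dual cone `C*` of a topological cone, with the weak*upper topology,
is a sober topological space. -/
theorem dual_cone_sober {C : Type*} [TopologicalSpace C]
    [AddCommMonoid C] [Module NNReal C] (htop : IsTopologicalCone C) :
    @T0Space (Cdual C) (dualTopology C) ∧ @QuasiSober (Cdual C) (dualTopology C) := dual_cone_sober'
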